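/- Let $(\beta_j)$ be a sequence with $0 < \beta \leq \beta_j < 1/2$ for all $j$, $m_j \geq 2$ integers, and $s > 0$ with $m_j\beta_j^s \leq 1$ for all $j$, where $s = \lim_{k\to\infty} \frac{\log(m_1\cdots m_k)}{-\log(\beta_1\cdots\beta_k)}$. Then for every $0 < \xi < 1$, the set $A_\xi := \{k : m_k\beta_k^s \leq \xi\}$ has natural density zero, i.e., $\#(A_\xi \cap [1,k])/k \to 0$ as $k \to \infty$. -/

import Mathlib

open Filter
open scoped Classical

set_option maxHeartbeats 1000000 in
/-- Lemma 6.3 / Corollary 6.5: if `β ≤ β_j < 1/2`, `m_j β_j^s ≤ 1` and `s` is the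
limit of `log(m_1⋯m_k)/(-log(β_1⋯β_k))`, then for every `0 < ξ < 1` the set
`A_ξ = {k : m_k β_k^s ≤ ξ}` has natural density zero. -/
theorem density_zero_of_small_factor (β : ℕ → ℝ) (β₀ : ℝ) (m : ℕ → ℕ) (s : ℝ)
    (hβ₀ : 0 < β₀) (hβ : ∀ j, β₀ ≤ β j ∧ β j < 1 / 2) (hm : ∀ j, 2 ≤ m j)
    (hs : 0 < s) (h1 : ∀ j, (m j : ℝ) * (β j) ^ s ≤ 1)
    (hlim : Tendsto (fun k : ℕ => Real.log (∏ j ∈ Finset.range (k + 1), (m j : ℝ)) /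
        (-Real.log (∏ j ∈ Finset.range (k + 1), β j))) atTop (nhds s)) :
    ∀ ξ : ℝ, 0 < ξ → ξ < 1 →
      Tendsto (fun k : ℕ =>
          ((Finset.range k).filter (fun j => (m j : ℝ) * (β j) ^ s ≤ ξ)).card / (k : ℝ))
        atTop (nhds 0) := by
  intro ξ hξ0 hξ1
  have hβpos : ∀ j, 0 < β j := fun j => lt_of_lt_of_le hβ₀ (hβ j).1
  have hβ1 : ∀ j, β j < 1 := fun j => (hβ j).2.trans (by norm_num)
  have hlogξ : Real.log ξ < 0 := Real.log_neg hξ0 hξ1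
  have hβ₀1 : β₀ < 1 := lt_of_le_of_lt (hβ 0).1 (hβ1 0)
  have hlogβ₀ : 0 < -Real.log β₀ := by
    have := Real.log_neg hβ₀ hβ₀1; linarith
  have hmpos : ∀ j, (0:ℝ) < m j := fun j => by
    exact_mod_cast Nat.lt_of_lt_of_le Nat.zero_lt_two (hm j)
  set L : ℕ → ℝ := fun k => Real.log (∏ j ∈ Finset.range (k+1), (m j : ℝ)) with hLdef
  set B : ℕ → ℝ := fun k => -Real.log (∏ j ∈ Finset.range (k+1), β j) with hBdef
  have hLsum : ∀ k, L k = ∑ j ∈ Finset.range (k+1), Real.log (m j) := fun k => by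
    simp only [hLdef]
    exact Real.log_prod (fun i _ => (hmpos i).ne')
  have hBsum : ∀ k, B k = ∑ j ∈ Finset.range (k+1), (-Real.log (β j)) := fun k => by
    simp only [hBdef]
    rw [Real.log_prod (fun i _ => (hβpos i).ne'), ← Finset.sum_neg_distrib]
  -- each term
  have hteq : ∀ j, Real.log (m j) + s * Real.log (β j)
      = Real.log ((m j : ℝ) * (β j) ^ s) := fun j => by
    rw [Real.log_mul (hmpos j).ne' (Real.rpow_pos_of_pos (hβpos j) s).ne',
      Real.log_rpow (hβpos j)]
  have hmβpos : ∀ j, 0 < (m j : ℝ) * (β j) ^ s := fun j =>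
    mul_pos (hmpos j) (Real.rpow_pos_of_pos (hβpos j) s)
  have ht0 : ∀ j, Real.log (m j) + s * Real.log (β j) ≤ 0 := fun j => by
    rw [hteq j]; exact Real.log_nonpos (le_of_lt (hmβpos j)) (h1 j)
  have htξ : ∀ j, (m j : ℝ) * (β j) ^ s ≤ ξ →
      Real.log (m j) + s * Real.log (β j) ≤ Real.log ξ := fun j hj => by
    rw [hteq j]; exact Real.log_le_log (hmβpos j) hj
  set c : ℕ → ℝ := fun k =>
    (((Finset.range k).filter (fun j => (m j : ℝ) * (β j) ^ s ≤ ξ)).card : ℝ) with hcdef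
  -- key inequality
  have key : ∀ k, L k - s * B k ≤ c k * Real.log ξ := by
    intro k
    have h1' : L k - s * B k
        = ∑ j ∈ Finset.range (k+1), (Real.log (m j) + s * Real.log (β j)) := by
      rw [hLsum, hBsum, Finset.mul_sum]
      rw [Finset.sum_add_distrib]
      ring_nf
      simp [Finset.mul_sum, mul_comm]
    have h2' : ∑ j ∈ Finset.range (k+1), (Real.log (m j) + s * Real.log (β j))
        ≤ ∑ j ∈ Finset.range (k+1),
            (if (m j : ℝ) * (β j) ^ s ≤ ξ then Real.log ξ else 0) := by
      refine Finset.sum_le_sum fun j _ => ?_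
      by_cases hj : (m j : ℝ) * (β j) ^ s ≤ ξ
      · simp [hj, htξ j hj]
      · simp [hj, ht0 j]
    have h3' : ∑ j ∈ Finset.range (k+1),
          (if (m j : ℝ) * (β j) ^ s ≤ ξ then Real.log ξ else 0)
        = (((Finset.range (k+1)).filter (fun j => (m j : ℝ) * (β j) ^ s ≤ ξ)).card : ℝ)
            * Real.log ξ := by
      rw [← Finset.sum_filter, Finset.sum_const, nsmul_eq_mul]
    have h4' : (((Finset.range (k+1)).filter (fun j => (m j : ℝ) * (β j) ^ s ≤ ξ)).card : ℝ)
          * Real.log ξ ≤ c k * Real.log ξ := by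
      apply mul_le_mul_of_nonpos_right _ hlogξ.le
      simp only [hcdef]
      exact_mod_cast Finset.card_le_card
        (Finset.filter_subset_filter _ (Finset.range_subset_range.mpr (Nat.le_succ k)))
    calc L k - s * B k = _ := h1'
      _ ≤ _ := h2'
      _ = _ := h3'
      _ ≤ _ := h4'
  have hBpos : ∀ k, 0 < B k := fun k => by
    rw [hBsum]
    refine Finset.sum_pos (fun j _ => ?_) (by simp)
    have := Real.log_neg (hβpos j) (hβ1 j); linarith
  have hBle : ∀ k, B k ≤ (k+1) * (-Real.log β₀) := fun k => by
    rw [hBsum]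
    calc ∑ j ∈ Finset.range (k+1), (-Real.log (β j))
        ≤ ∑ j ∈ Finset.range (k+1), (-Real.log β₀) := by
          refine Finset.sum_le_sum fun j _ => ?_
          have := Real.log_le_log hβ₀ (hβ j).1; linarith
      _ = (k+1) * (-Real.log β₀) := by
          rw [Finset.sum_const, Finset.card_range, nsmul_eq_mul]; push_cast; ring
  have hc0 : ∀ k, 0 ≤ c k := fun k => by positivity
  have hrle : ∀ k, L k / B k ≤ s := fun k => by
    rw [div_le_iff₀ (hBpos k)]
    nlinarith [key k, mul_nonpos_of_nonneg_of_nonpos (hc0 k) hlogξ.le]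
  -- bound on c k / k
  have hbound : ∀ k : ℕ, 1 ≤ k → c k / k ≤
      (((k:ℝ)+1) / k) * (-Real.log β₀) * (s - L k / B k) * (-Real.log ξ)⁻¹ := by
    intro k hk
    have hk0 : (0:ℝ) < k := by exact_mod_cast hk
    have hcb : c k ≤ (s * B k - L k) / (-Real.log ξ) := by
      rw [le_div_iff₀ (by linarith)]
      nlinarith [key k]
    have hstep : s * B k - L k ≤ ((k:ℝ)+1) * (-Real.log β₀) * (s - L k / B k) := by
      have hsr : 0 ≤ s - L k / B k := by linarith [hrle k]
      have hBne := (hBpos k).ne'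
      have : s * B k - L k = B k * (s - L k / B k) := by
        field_simp
      rw [this]
      exact mul_le_mul_of_nonneg_right (hBle k) hsr
    have : c k ≤ ((k:ℝ)+1) * (-Real.log β₀) * (s - L k / B k) * (-Real.log ξ)⁻¹ := by
      calc c k ≤ (s * B k - L k) / (-Real.log ξ) := hcb
        _ ≤ _ := by
            rw [div_eq_mul_inv]
            exact mul_le_mul_of_nonneg_right hstep (inv_nonneg.mpr (by linarith))
    calc c k / k ≤ (((k:ℝ)+1) * (-Real.log β₀) * (s - L k / B k) * (-Real.log ξ)⁻¹) / k :=
          div_le_div_of_nonneg_right this hk0.le |>.trans_eq rfl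
      _ = (((k:ℝ)+1) / k) * (-Real.log β₀) * (s - L k / B k) * (-Real.log ξ)⁻¹ := by ring
  -- the bounding function tends to 0
  have hglim : Tendsto (fun k : ℕ =>
      (((k:ℝ)+1) / k) * (-Real.log β₀) * (s - L k / B k) * (-Real.log ξ)⁻¹) atTop (nhds 0) := by
    have h1lim : Tendsto (fun k : ℕ => ((k:ℝ)+1) / k) atTop (nhds 1) := by
      have h0 : Tendsto (fun k : ℕ => 1 / (k:ℝ)) atTop (nhds 0) :=
        tendsto_one_div_atTop_nhds_zero_nat
      have hx : Tendsto (fun k : ℕ => 1 + 1 / (k:ℝ)) atTop (nhds 1) := by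
        simpa using h0.const_add 1
      refine hx.congr' ?_
      filter_upwards [eventually_gt_atTop 0] with k hk
      have hk0 : (0:ℝ) < k := by exact_mod_cast hk
      field_simp
    have h2lim : Tendsto (fun k : ℕ => s - L k / B k) atTop (nhds 0) := by
      have h := (tendsto_const_nhds : Tendsto (fun _ : ℕ => s) atTop (nhds s)).sub hlim
      simpa using h
    have := ((h1lim.mul (tendsto_const_nhds : Tendsto (fun _ : ℕ => -Real.log β₀) atTop (nhds (-Real.log β₀)))).mul h2lim).mul
      (tendsto_const_nhds : Tendsto (fun _ : ℕ => (-Real.log ξ)⁻¹) atTop (nhds (-Real.log ξ)⁻¹))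
    simpa using this
  refine squeeze_zero' ?_ ?_ hglim
  · filter_upwards with k
    positivity
  · filter_upwards [eventually_ge_atTop 1] with k hk
    exact hbound k hk
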